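/- For all t, ψ with 0 ≤ ψ ≤ t ≤ π/2, arccos(cos t / cos ψ) ≥ sqrt(t² − ψ²). -/

import Mathlib

open Real Set

lemma convexOn_cos_sqrt : ConvexOn ℝ (Icc (0:ℝ) (π^2)) (fun x => Real.cos (Real.sqrt x)) := by
  have hD : Convex ℝ (Icc (0:ℝ) (π^2)) := convex_Icc _ _
  have hint : interior (Icc (0:ℝ) (π^2)) = Ioo 0 (π^2) := interior_Icc
  refine convexOn_of_hasDerivWithinAt2_nonneg hD
    (f' := fun x => -Real.sin (Real.sqrt x) / (2 * Real.sqrt x))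
    (f'' := fun x => (Real.sin (Real.sqrt x) - Real.sqrt x * Real.cos (Real.sqrt x)) /
      (4 * x * Real.sqrt x))
    (Real.continuous_cos.comp Real.continuous_sqrt).continuousOn ?_ ?_ ?_
  · intro x hx
    rw [hint] at hx
    have hx0 : (0:ℝ) < x := hx.1
    have hs0 : (0:ℝ) < Real.sqrt x := Real.sqrt_pos.2 hx0
    have h1 : HasDerivAt (fun x => Real.cos (Real.sqrt x))
        (-Real.sin (Real.sqrt x) * (1 / (2 * Real.sqrt x))) x :=
      (Real.hasDerivAt_cos (Real.sqrt x)).comp x (Real.hasDerivAt_sqrt hx0.ne')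
    have : -Real.sin (Real.sqrt x) * (1 / (2 * Real.sqrt x))
        = -Real.sin (Real.sqrt x) / (2 * Real.sqrt x) := by ring
    rw [this] at h1
    exact h1.hasDerivWithinAt
  · intro x hx
    rw [hint] at hx
    have hx0 : (0:ℝ) < x := hx.1
    have hs0 : (0:ℝ) < Real.sqrt x := Real.sqrt_pos.2 hx0
    have hnum : HasDerivAt (fun x => -Real.sin (Real.sqrt x))
        (-(Real.cos (Real.sqrt x) * (1 / (2 * Real.sqrt x)))) x :=
      (((Real.hasDerivAt_sin (Real.sqrt x)).comp x (Real.hasDerivAt_sqrt hx0.ne'))).neg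
    have hden : HasDerivAt (fun x => 2 * Real.sqrt x) (2 * (1 / (2 * Real.sqrt x))) x :=
      (Real.hasDerivAt_sqrt hx0.ne').const_mul 2
    have h := hnum.div hden (by positivity)
    have heq : (-(Real.cos (Real.sqrt x) * (1 / (2 * Real.sqrt x))) * (2 * Real.sqrt x) -
        -Real.sin (Real.sqrt x) * (2 * (1 / (2 * Real.sqrt x)))) / (2 * Real.sqrt x) ^ 2
        = (Real.sin (Real.sqrt x) - Real.sqrt x * Real.cos (Real.sqrt x)) /
          (4 * x * Real.sqrt x) := by
      have hxx : Real.sqrt x ^ 2 = x := Real.sq_sqrt hx0.le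
      field_simp
      linear_combination (4 * Real.cos (Real.sqrt x) * Real.sqrt x -
        4 * Real.sin (Real.sqrt x)) * hxx
    rw [heq] at h
    exact h.hasDerivWithinAt
  · intro x hx
    rw [hint] at hx
    have hx0 : (0:ℝ) < x := hx.1
    have hs0 : (0:ℝ) < Real.sqrt x := Real.sqrt_pos.2 hx0
    have hsπ : Real.sqrt x < π := by
      have : Real.sqrt x < Real.sqrt (π^2) := by
        exact Real.sqrt_lt_sqrt hx0.le hx.2
      rwa [Real.sqrt_sq Real.pi_pos.le] at this
    set s := Real.sqrt x with hs
    have hnum : 0 ≤ Real.sin s - s * Real.cos s := by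
      rcases le_or_gt s (π/2) with h | h
      · rcases eq_or_lt_of_le h with h' | h'
        · rw [h']; norm_num [Real.cos_pi_div_two, Real.sin_pi_div_two]
        · have ht := Real.lt_tan hs0 h'
          have hc : 0 < Real.cos s := Real.cos_pos_of_mem_Ioo ⟨by linarith, h'⟩
          rw [Real.tan_eq_sin_div_cos, lt_div_iff₀ hc] at ht
          linarith
      · have h1 : Real.sin s ≥ 0 := Real.sin_nonneg_of_nonneg_of_le_pi hs0.le hsπ.le
        have h2 : Real.cos s ≤ 0 := Real.cos_nonpos_of_pi_div_two_le_of_le h.le (by linarith [Real.pi_pos])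
        nlinarith
    positivity

lemma cos_sqrt_le (a b : ℝ) (ha : 0 ≤ a) (hb : 0 ≤ b) (ha2 : a ≤ π/2) (hb2 : b ≤ π/2) :
    Real.cos (Real.sqrt (a^2 + b^2)) ≤ Real.cos a * Real.cos b := by
  have hπ := Real.pi_pos
  rcases le_or_gt ((π/2)^2) (a^2 + b^2) with h | h
  · have h1 : π/2 ≤ Real.sqrt (a^2+b^2) := by
      rw [show π/2 = Real.sqrt ((π/2)^2) by rw [Real.sqrt_sq (by positivity)]]
      exact Real.sqrt_le_sqrt h
    have h2 : Real.sqrt (a^2+b^2) ≤ π + π/2 := by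
      have : a^2 + b^2 ≤ (π + π/2)^2 := by nlinarith
      calc Real.sqrt (a^2+b^2) ≤ Real.sqrt ((π+π/2)^2) := Real.sqrt_le_sqrt this
        _ = π + π/2 := Real.sqrt_sq (by positivity)
    have := Real.cos_nonpos_of_pi_div_two_le_of_le h1 h2
    have hca : 0 ≤ Real.cos a := Real.cos_nonneg_of_mem_Icc ⟨by linarith, ha2⟩
    have hcb : 0 ≤ Real.cos b := Real.cos_nonneg_of_mem_Icc ⟨by linarith, hb2⟩
    nlinarith
  · have hmem1 : (a-b)^2 ∈ Icc (0:ℝ) (π^2) := by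
      constructor
      · positivity
      · nlinarith
    have hmem2 : (a+b)^2 ∈ Icc (0:ℝ) (π^2) := by
      constructor
      · positivity
      · nlinarith
    have key := convexOn_cos_sqrt.2 hmem1 hmem2 (by norm_num : (0:ℝ) ≤ 1/2)
      (by norm_num : (0:ℝ) ≤ 1/2) (by norm_num)
    simp only [smul_eq_mul] at key
    have hmid : 1/2 * (a-b)^2 + 1/2 * (a+b)^2 = a^2 + b^2 := by ring
    rw [hmid] at key
    have h1 : Real.sqrt ((a-b)^2) = |a - b| := Real.sqrt_sq_eq_abs _
    have h2 : Real.sqrt ((a+b)^2) = a + b := Real.sqrt_sq (by positivity)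
    rw [h1, h2] at key
    have h3 : Real.cos |a - b| = Real.cos (a - b) := Real.cos_abs _
    rw [h3] at key
    have : Real.cos (a-b) + Real.cos (a+b) = 2 * (Real.cos a * Real.cos b) := by
      rw [Real.cos_sub, Real.cos_add]; ring
    linarith

theorem arccos_cos_div_cos_ge (t ψ : ℝ) (h0 : 0 ≤ ψ) (h1 : ψ ≤ t) (h2 : t ≤ Real.pi / 2) :
    Real.sqrt (t ^ 2 - ψ ^ 2) ≤ Real.arccos (Real.cos t / Real.cos ψ) := by
  have hπ := Real.pi_pos
  rcases eq_or_lt_of_le (h1.trans h2) with hψ | hψ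
  · -- ψ = π/2, so t = π/2
    have ht : t = π/2 := le_antisymm h2 (hψ ▸ h1)
    rw [ht, ← hψ]
    simp [Real.arccos_nonneg]
  · have hcψ : 0 < Real.cos ψ := Real.cos_pos_of_mem_Ioo ⟨by linarith, hψ⟩
    have hct : 0 ≤ Real.cos t := Real.cos_nonneg_of_mem_Icc ⟨by linarith, h2⟩
    have hle : Real.cos t ≤ Real.cos ψ :=
      Real.cos_le_cos_of_nonneg_of_le_pi h0 (by linarith) h1
    set q := Real.cos t / Real.cos ψ with hq
    have hq0 : 0 ≤ q := by positivity
    have hq1 : q ≤ 1 := by rw [hq, div_le_one hcψ]; exact hle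
    set u := Real.arccos q with hu
    have hu0 : 0 ≤ u := Real.arccos_nonneg q
    have hu2 : u ≤ π/2 := Real.arccos_le_pi_div_two.2 hq0
    have hcu : Real.cos u = q := Real.cos_arccos (by linarith) hq1
    have hprod : Real.cos ψ * Real.cos u = Real.cos t := by
      rw [hcu, hq]; field_simp
    have hkey := cos_sqrt_le ψ u h0 hu0 (by linarith) hu2
    rw [hprod] at hkey
    -- t ≤ sqrt(ψ² + u²)
    have hts : t ≤ Real.sqrt (ψ^2 + u^2) := by
      by_contra hc
      push_neg at hc
      have hs0 : 0 ≤ Real.sqrt (ψ^2 + u^2) := Real.sqrt_nonneg _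
      have hsπ : Real.sqrt (ψ^2+u^2) ≤ π := by
        have : ψ^2 + u^2 ≤ π^2 := by nlinarith
        calc Real.sqrt (ψ^2+u^2) ≤ Real.sqrt (π^2) := Real.sqrt_le_sqrt this
          _ = π := Real.sqrt_sq hπ.le
      have := Real.strictAntiOn_cos ⟨hs0, hsπ⟩ ⟨by linarith, by linarith⟩ hc
      linarith
    have ht2 : t^2 ≤ ψ^2 + u^2 := by
      nlinarith [Real.sq_sqrt (by positivity : (0:ℝ) ≤ ψ^2+u^2),
        Real.sqrt_nonneg (ψ^2+u^2), hts]
    calc Real.sqrt (t^2 - ψ^2) ≤ Real.sqrt (u^2) := Real.sqrt_le_sqrt (by linarith)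
      _ = u := Real.sqrt_sq hu0
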